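/- For b ∈ ℝ^N, one has b ∈ C_A if and only if b ≤ b̃ componentwise for every b̃ ∈ ℝ^N with Q_{A,b} = Q_{A,b̃}. -/

import Mathlib

open scoped RealInnerProductSpace

noncomputable section

/-- `Q_{A,b} = {x ∈ ℝ^d : a_iᵀx ≤ b_i for all i}`. -/
def Qset {d N : ℕ} (a : Fin N → EuclideanSpace ℝ (Fin d)) (b : Fin N → ℝ) :
    Set (EuclideanSpace ℝ (Fin d)) :=
  {x | ∀ i, ⟪a i, x⟫ ≤ b i}

/-- `C_A = {b : for every i there is x ∈ Q_{A,b} with a_iᵀx = b_i}`. -/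
def CA {d N : ℕ} (a : Fin N → EuclideanSpace ℝ (Fin d)) : Set (Fin N → ℝ) :=
  {b | ∀ i, ∃ x ∈ Qset a b, ⟪a i, x⟫ = b i}

/-- A set is polyhedral if it is the intersection of finitely many half-spaces. -/
def IsPolyhedral {V : Type} [AddCommGroup V] [Module ℝ V] (S : Set V) : Prop :=
  ∃ (ι : Type) (_ : Fintype ι) (g : ι → V →ₗ[ℝ] ℝ) (β : ι → ℝ),
    S = {x | ∀ i, g i x ≤ β i}

/-- Fourier–Motzkin elimination of one direction. -/
lemma fm_step {V : Type} [AddCommGroup V] [Module ℝ V] {S : Set V}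
    (hS : IsPolyhedral S) (u : V) :
    IsPolyhedral {x | ∃ t : ℝ, x + t • u ∈ S} := by
  classical
  obtain ⟨ι, _, g, β, rfl⟩ := hS
  refine ⟨{i : ι // g i u = 0} ⊕ ({i : ι // 0 < g i u} × {j : ι // g j u < 0}),
    inferInstance,
    Sum.elim (fun i => g i.1)
      (fun p => g p.1.1 u • g p.2.1 - g p.2.1 u • g p.1.1),
    Sum.elim (fun i => β i.1)
      (fun p => g p.1.1 u * β p.2.1 - g p.2.1 u * β p.1.1), ?_⟩
  ext x
  simp only [Set.mem_setOf_eq]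
  constructor
  · rintro ⟨t, ht⟩
    have ht' : ∀ i, g i x + t * g i u ≤ β i := by
      intro i
      have := ht i
      simpa [map_add, map_smul, smul_eq_mul, mul_comm] using this
    rintro (⟨i, hi⟩ | ⟨⟨i, hi⟩, ⟨j, hj⟩⟩)
    · have := ht' i
      simpa [hi] using this
    · simp only [Sum.elim_inr, LinearMap.sub_apply, LinearMap.smul_apply, smul_eq_mul]
      nlinarith [ht' i, ht' j, mul_le_mul_of_nonneg_left (ht' j) hi.le,
        mul_le_mul_of_nonneg_left (ht' i) (neg_nonneg.mpr hj.le)]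
  · intro h
    have h0 : ∀ i, g i u = 0 → g i x ≤ β i := fun i hi => by
      simpa using h (Sum.inl ⟨i, hi⟩)
    have hpair : ∀ (i j : ι), 0 < g i u → g j u < 0 →
        g i u * g j x - g j u * g i x ≤ g i u * β j - g j u * β i := by
      intro i j hi hj
      have := h (Sum.inr (⟨i, hi⟩, ⟨j, hj⟩))
      simpa [LinearMap.sub_apply, LinearMap.smul_apply, smul_eq_mul] using this
    set L : Set ℝ := (fun j => (β j - g j x) / g j u) '' {j | g j u < 0} with hLdef
    set U : Set ℝ := (fun i => (β i - g i x) / g i u) '' {i | 0 < g i u} with hUdef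
    have hLfin : L.Finite := (Set.toFinite _).image _
    have hUfin : U.Finite := (Set.toFinite _).image _
    have key : ∀ t : ℝ, (∀ i, g i x + t * g i u ≤ β i) →
        x + t • u ∈ {x | ∀ i, g i x ≤ β i} := by
      intro t htc i
      have := htc i
      simp only [Set.mem_setOf_eq, map_add, map_smul, smul_eq_mul]
      linarith [htc i]
    by_cases hL : L.Nonempty
    · set t := sSup L with htdef
      obtain ⟨j₀, hj₀, hj₀eq⟩ := hL.csSup_mem hLfin
      simp only [Set.mem_setOf_eq] at hj₀
      refine ⟨t, key t ?_⟩
      intro i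
      rcases lt_trichotomy (g i u) 0 with hneg | hzero | hpos
      · have hle : (β i - g i x) / g i u ≤ t :=
          le_csSup hLfin.bddAbove ⟨i, hneg, rfl⟩
        have : t * g i u ≤ ((β i - g i x) / g i u) * g i u :=
          mul_le_mul_of_nonpos_right hle hneg.le
        rw [div_mul_cancel₀ _ hneg.ne] at this
        linarith
      · rw [hzero]; simpa using h0 i hzero
      · have hp := hpair i j₀ hpos hj₀
        have ht' : t * g j₀ u = β j₀ - g j₀ x := by
          rw [htdef, ← hj₀eq]; exact div_mul_cancel₀ _ hj₀.ne
        have h2 : g j₀ x = β j₀ - t * g j₀ u := by linarith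
        rw [h2] at hp
        have hkey : (-(g j₀ u)) * (g i x + t * g i u) ≤ (-(g j₀ u)) * β i := by
          nlinarith [hp]
        have := (mul_le_mul_iff_right₀ (by linarith : (0:ℝ) < -(g j₀ u))).mp hkey
        linarith
    · have hnoneg : ∀ j, ¬ g j u < 0 := by
        intro j hj
        exact hL ⟨_, ⟨j, hj, rfl⟩⟩
      by_cases hU2 : U.Nonempty
      · set t := sInf U with htdef
        refine ⟨t, key t ?_⟩
        intro i
        rcases lt_trichotomy (g i u) 0 with hneg | hzero | hpos
        · exact absurd hneg (hnoneg i)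
        · rw [hzero]; simpa using h0 i hzero
        · have hle : t ≤ (β i - g i x) / g i u :=
            csInf_le hUfin.bddBelow ⟨i, hpos, rfl⟩
          have : t * g i u ≤ ((β i - g i x) / g i u) * g i u :=
            mul_le_mul_of_nonneg_right hle hpos.le
          rw [div_mul_cancel₀ _ hpos.ne'] at this
          linarith
      · refine ⟨0, key 0 ?_⟩
        intro i
        rcases lt_trichotomy (g i u) 0 with hneg | hzero | hpos
        · exact absurd hneg (hnoneg i)
        · simpa [hzero] using h0 i hzero
        · exact absurd ⟨_, ⟨i, hpos, rfl⟩⟩ hU2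

/-- Saturating a polyhedral set by the span of a finite list stays polyhedral. -/
lemma fm_list {V : Type} [AddCommGroup V] [Module ℝ V] {S : Set V}
    (hS : IsPolyhedral S) (l : List V) :
    IsPolyhedral {x | ∃ y ∈ Submodule.span ℝ {v | v ∈ l}, x + y ∈ S} := by
  induction l generalizing S with
  | nil =>
    have : {x | ∃ y ∈ Submodule.span ℝ {v : V | v ∈ ([] : List V)}, x + y ∈ S} = S := by
      have hset : {v : V | v ∈ ([] : List V)} = (∅ : Set V) := by ext v; simp
      ext x
      constructor
      · rintro ⟨y, hy, hxy⟩
        rw [hset, Submodule.span_empty, Submodule.mem_bot] at hy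
        subst hy; simpa using hxy
      · intro hx
        exact ⟨0, Submodule.zero_mem _, by simpa using hx⟩
    rw [this]; exact hS
  | cons u l ih =>
    have h1 : IsPolyhedral {x | ∃ y ∈ Submodule.span ℝ {v | v ∈ l}, x + y ∈ S} := ih hS
    have h2 := fm_step h1 u
    have : {x | ∃ t : ℝ, x + t • u ∈ {x | ∃ y ∈ Submodule.span ℝ {v | v ∈ l}, x + y ∈ S}}
        = {x | ∃ y ∈ Submodule.span ℝ {v | v ∈ u :: l}, x + y ∈ S} := by
      ext x
      simp only [Set.mem_setOf_eq]
      constructor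
      · rintro ⟨t, y, hy, hxy⟩
        refine ⟨t • u + y, ?_, by rw [← add_assoc]; exact hxy⟩
        have hspan : ({v : V | v ∈ u :: l} : Set V) = insert u {v | v ∈ l} := by
          ext v; simp
        rw [hspan, Submodule.mem_span_insert]
        exact ⟨t, y, hy, rfl⟩
      · rintro ⟨y, hy, hxy⟩
        have hspan : ({v : V | v ∈ u :: l} : Set V) = insert u {v | v ∈ l} := by
          ext v; simp
        rw [hspan, Submodule.mem_span_insert] at hy
        obtain ⟨t, z, hz, rfl⟩ := hy
        exact ⟨t, z, hz, by rw [← add_assoc] at hxy; exact hxy⟩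
    rw [this] at h2
    exact h2

/-- The image of a polyhedral set under a surjective linear functional is closed. -/
lemma image_closed {V : Type} [NormedAddCommGroup V] [NormedSpace ℝ V]
    [FiniteDimensional ℝ V] {S : Set V}
    (hS : IsPolyhedral S) (f : V →ₗ[ℝ] ℝ) (w : V) (hw : f w = 1) :
    IsClosed (f '' S) := by
  classical
  obtain ⟨sgen, hsgen⟩ := (IsNoetherian.noetherian (LinearMap.ker f))
  have hsat : IsPolyhedral {x | ∃ y ∈ Submodule.span ℝ {v | v ∈ sgen.toList}, x + y ∈ S} :=
    fm_list hS sgen.toList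
  have hspan : Submodule.span ℝ {v : V | v ∈ sgen.toList} = LinearMap.ker f := by
    rw [← hsgen]
    congr 1
    ext v; simp
  obtain ⟨ι, _, g, β, hQ'⟩ := hsat
  have himg : f '' S = {s : ℝ | ∀ i, s * g i w ≤ β i} := by
    ext s
    constructor
    · rintro ⟨x, hx, rfl⟩
      have hmem : f x • w ∈
          {x | ∃ y ∈ Submodule.span ℝ {v : V | v ∈ sgen.toList}, x + y ∈ S} := by
        refine ⟨x - f x • w, ?_, by abel_nf; simpa using hx⟩
        rw [hspan]
        simp [LinearMap.mem_ker, map_sub, map_smul, hw]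
      rw [hQ'] at hmem
      intro i
      have := hmem i
      simpa [map_smul, smul_eq_mul, mul_comm] using this
    · intro hs
      have hmem : s • w ∈ {x | ∀ i, g i x ≤ β i} := by
        intro i
        have := hs i
        simpa [map_smul, smul_eq_mul, mul_comm] using this
      rw [← hQ'] at hmem
      obtain ⟨y, hy, hxy⟩ := hmem
      refine ⟨s • w + y, hxy, ?_⟩
      rw [hspan] at hy
      simp [map_add, map_smul, hw, LinearMap.mem_ker.mp hy]
  rw [himg]
  have : {s : ℝ | ∀ i, s * g i w ≤ β i} = ⋂ i, {s : ℝ | s * g i w ≤ β i} := by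
    ext s; simp
  rw [this]
  exact isClosed_iInter fun i =>
    isClosed_le (continuous_id.mul continuous_const) continuous_const

theorem stmt_1 (d N : ℕ) (hd : 1 ≤ d) (hN : 1 ≤ N)
    (a : Fin N → EuclideanSpace ℝ (Fin d))
    (ha_inj : Function.Injective a) (ha_norm : ∀ i, ‖a i‖ = 1)
    (b : Fin N → ℝ) :
    b ∈ CA a ↔ ∀ btil : Fin N → ℝ, Qset a b = Qset a btil → b ≤ btil := by
  classical
  constructor
  · intro hb btil hQ i
    obtain ⟨x, hx, hxi⟩ := hb i
    rw [hQ] at hx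
    calc b i = ⟪a i, x⟫ := hxi.symm
    _ ≤ btil i := hx i
  · intro H
    intro i
    by_contra hc
    push_neg at hc
    by_cases hQ : (Qset a b).Nonempty
    · set f := (innerSL ℝ (a i)).toLinearMap with hfdef
      have hfx : ∀ x, f x = ⟪a i, x⟫ := fun x => rfl
      have hpoly : IsPolyhedral (Qset a b) :=
        ⟨Fin N, inferInstance, fun j => (innerSL ℝ (a j)).toLinearMap, b, by
          ext x; rfl⟩
      have hw : f (a i) = 1 := by
        rw [hfx, real_inner_self_eq_norm_sq, ha_norm i]; norm_num
      have hcl := image_closed hpoly f (a i) hw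
      set T := f '' Qset a b with hTdef
      have hTne : T.Nonempty := hQ.image _
      have hTbdd : BddAbove T := by
        refine ⟨b i, ?_⟩
        rintro s ⟨x, hx, rfl⟩
        rw [hfx]
        exact hx i
      have hsmem : sSup T ∈ T := hcl.csSup_mem hTne hTbdd
      obtain ⟨x₀, hx₀, hx₀eq⟩ := hsmem
      have hsle : sSup T ≤ b i := by
        rw [← hx₀eq, hfx]; exact hx₀ i
      have hlt : sSup T < b i := by
        rcases lt_or_eq_of_le hsle with h | h
        · exact h
        · exact absurd (by rw [← hfx, hx₀eq, h]) (hc x₀ hx₀)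
      set btil := Function.update b i (sSup T) with hbtil
      have hQQ : Qset a b = Qset a btil := by
        ext x
        constructor
        · intro hx j
          by_cases hj : j = i
          · subst hj
            rw [hbtil, Function.update_self]
            exact le_csSup hTbdd ⟨x, hx, rfl⟩
          · rw [hbtil, Function.update_of_ne hj]
            exact hx j
        · intro hx j
          by_cases hj : j = i
          · subst hj
            have := hx j
            rw [hbtil, Function.update_self] at this
            exact le_trans this hlt.le
          · have := hx j
            rw [hbtil, Function.update_of_ne hj] at this
            exact this
      have := H btil hQQ i
      rw [hbtil, Function.update_self] at this
      linarith
    · set btil := Function.update b i (b i - 1) with hbtil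
      have hempty : Qset a b = ∅ := Set.not_nonempty_iff_eq_empty.mp hQ
      have hsub : Qset a btil ⊆ Qset a b := by
        intro x hx j
        by_cases hj : j = i
        · subst hj
          have := hx j
          rw [hbtil, Function.update_self] at this
          linarith
        · have := hx j
          rw [hbtil, Function.update_of_ne hj] at this
          exact this
      have hQQ : Qset a b = Qset a btil := by
        rw [hempty]
        symm
        rw [← Set.subset_empty_iff]
        rw [hempty] at hsub
        exact hsub
      have := H btil hQQ i
      rw [hbtil, Function.update_self] at this
      linarith
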